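/- Let 𝔽 be a field of characteristic 2 with 2-basis {t_i}_{i∈ℐ}, and let p = Σ_{j=0}^d p_j x^{d-j} ∈ 𝔽[x] (with p₀ = 1) be a monic, irreducible and inseparable polynomial of degree d. Then d is even and p_j = 0 for every odd j; moreover, with ℐ₁ = {j₁, …, j_n} the (nonempty) finite set of 2-basis indices occurring in the coefficients of p, there exists l ∈ {1, …, n} such that t_{j_l} belongs to the subfield 𝔽(p)²(t_{j₁}, …, t_{j_{l−1}}, t_{j_{l+1}}, …, t_{j_n}) of 𝔽(p) = 𝔽[x]/(p) generated by the squares of 𝔽(p) together with the elements t_{j_m} for m ≠ l. -/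
import Mathlib


/-- A family `t : ι → k` is a 2-basis of the field `k` of characteristic 2 if every
element of `k` is uniquely a finite sum `Σ_I t^I f_I²` over finitely supported
`I ∈ {0,1}^ι` (encoded as `Finset ι`). -/
def IsTwoBasisFam {k ι : Type*} [Field k] (t : ι → k) : Prop :=
  ∀ f : k, ∃! c : Finset ι →₀ k, f = c.sum fun I a => (∏ i ∈ I, t i) * a ^ 2

/-- Let `𝔽` be a field of characteristic 2 with 2-basis `{t_i}`, and let
`p = Σ_{j=0}^d p_j x^{d-j}` be a monic, irreducible, inseparable (zero derivative)
polynomial of degree `d`.  Then `d` is even and `p_j = 0` for all odd `j`; moreover,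
with `ℐ₁ = {j₁,…,j_n}` (enumerated by `e`) the set of 2-basis indices occurring in the
2-adic expansions `p_j = Σ_I t^I p_{j,I}²` of the coefficients of `p`, there exists
`l` such that `t_{j_l}` belongs to the subfield of `𝔽(p) = 𝔽[x]/(p)` generated by the
squares `𝔽(p)²` together with the elements `t_{j_m}`, `m ≠ l`. -/
theorem indep_lemma {K : Type*} [Field K] {n : ℕ} (u : Fin n → K)
    (H : ∀ l : Fin n, u l ∉ Subfield.closure
      ({x : K | ∃ y, y ^ 2 = x} ∪ u '' {m | m ≠ l})) :
    ∀ (s : Finset (Fin n)) (b : Finset (Fin n) → K), (∀ J, ∃ y, y ^ 2 = b J) →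
      (∑ J ∈ s.powerset, (∏ m ∈ J, u m) * b J = 0) → ∀ J ∈ s.powerset, b J = 0 := by
  intro s
  induction s using Finset.induction with
  | empty =>
    intro b hb hsum J hJ
    simp only [Finset.powerset_empty, Finset.mem_singleton] at hJ
    subst hJ
    simpa using hsum
  | @insert a s₀ ha ih =>
    intro b hb hsum J hJ
    rw [Finset.sum_powerset_insert ha] at hsum
    set A := ∑ J ∈ s₀.powerset, (∏ m ∈ J, u m) * b J with hA
    have hB : ∑ J ∈ s₀.powerset, (∏ m ∈ insert a J, u m) * b (insert a J)
        = u a * ∑ J ∈ s₀.powerset, (∏ m ∈ J, u m) * b (insert a J) := by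
      rw [Finset.mul_sum]
      refine Finset.sum_congr rfl fun J hJ' => ?_
      rw [Finset.prod_insert (fun h => ha (Finset.mem_powerset.mp hJ' h)), mul_assoc]
    rw [hB] at hsum
    set B := ∑ J ∈ s₀.powerset, (∏ m ∈ J, u m) * b (insert a J) with hBdef
    set F := Subfield.closure ({x : K | ∃ y, y ^ 2 = x} ∪ u '' {m | m ≠ a}) with hF
    have hmemprod : ∀ J ∈ s₀.powerset, (∏ m ∈ J, u m) ∈ F := by
      intro J hJ'
      refine Subfield.prod_mem _ fun m hm => Subfield.subset_closure (Or.inr ?_)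
      exact ⟨m, fun h => ha (h ▸ Finset.mem_powerset.mp hJ' hm), rfl⟩
    have hmemb : ∀ J, b J ∈ F := fun J => Subfield.subset_closure (Or.inl (hb J))
    have hAmem : A ∈ F := Subfield.sum_mem _ fun J hJ' =>
      Subfield.mul_mem _ (hmemprod J hJ') (hmemb J)
    have hBmem : B ∈ F := Subfield.sum_mem _ fun J hJ' =>
      Subfield.mul_mem _ (hmemprod J hJ') (hmemb _)
    have hB0 : B = 0 := by
      by_contra hB0
      have : u a = -A * B⁻¹ := by
        rw [eq_mul_inv_iff_mul_eq₀ hB0]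
        linear_combination hsum
      exact H a (this ▸ Subfield.mul_mem _ (Subfield.neg_mem _ hAmem) (Subfield.inv_mem _ hBmem))
    rw [hB0, mul_zero, add_zero] at hsum
    have h1 := ih b hb hsum
    have h2 := ih (fun J => b (insert a J)) (fun J => hb _) (by rw [← hBdef, hB0])
    rw [Finset.mem_powerset, Finset.subset_insert_iff] at hJ
    by_cases haJ : a ∈ J
    · have := h2 (J.erase a) (Finset.mem_powerset.mpr hJ)
      simp only [Finset.insert_erase haJ] at this
      exact this
    · rw [Finset.erase_eq_of_notMem haJ] at hJ
      exact h1 J (Finset.mem_powerset.mpr hJ)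

theorem stmt10 {𝔽 ι : Type*} [Field 𝔽] [CharP 𝔽 2] [DecidableEq ι]
    (t : ι → 𝔽) (ht : IsTwoBasisFam t)
    (p : Polynomial 𝔽) (hmonic : p.Monic) (hirr : Fact (Irreducible p))
    (hinsep : Polynomial.derivative p = 0)
    (d : ℕ) (hd : p.natDegree = d)
    (c : ℕ → (Finset ι →₀ 𝔽))
    (hc : ∀ j ≤ d, p.coeff (d - j) = (c j).sum fun I a => (∏ i ∈ I, t i) * a ^ 2)
    (n : ℕ) (e : Fin n → ι) (he : Function.Injective e)
    (hrange : Set.range e = {i : ι | ∃ j ≤ d, ∃ I ∈ (c j).support, i ∈ I}) :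
    Even d ∧ (∀ j ≤ d, Odd j → p.coeff (d - j) = 0) ∧
    ∃ l : Fin n, algebraMap 𝔽 (AdjoinRoot p) (t (e l)) ∈
      Subfield.closure ({x : AdjoinRoot p | ∃ y, y ^ 2 = x} ∪
        (fun m : Fin n => algebraMap 𝔽 (AdjoinRoot p) (t (e m))) '' {m | m ≠ l}) := by
  have hoddc : ∀ m, Odd m → p.coeff m = 0 := by
    intro m hm
    obtain ⟨k, rfl⟩ := hm
    have h1 : (Polynomial.derivative p).coeff (2 * k) = 0 := by rw [hinsep]; simp
    rw [Polynomial.coeff_derivative] at h1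
    have h2 : ((2 * k : ℕ) : 𝔽) + 1 ≠ 0 := by
      have h3 : ((2 * k : ℕ) : 𝔽) = 0 := by
        rw [CharP.cast_eq_zero_iff 𝔽 2]; omega
      rw [h3, zero_add]; exact one_ne_zero
    exact (mul_eq_zero.mp h1).resolve_right h2
  have hdeven : Even d := by
    by_contra hodd'
    have h1 : p.coeff d = 0 := hoddc d (Nat.not_even_iff_odd.mp hodd')
    rw [← hd, hmonic.coeff_natDegree] at h1
    exact one_ne_zero h1
  have part2 : ∀ j ≤ d, Odd j → p.coeff (d - j) = 0 :=
    fun j hj hjodd => hoddc _ (Nat.Even.sub_odd hj hdeven hjodd)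
  refine ⟨hdeven, part2, ?_⟩
  by_contra hcon
  push_neg at hcon
  haveI : Fact (Nat.Prime 2) := ⟨Nat.prime_two⟩
  set K := AdjoinRoot p with hK
  set φ := algebraMap 𝔽 K with hφ
  haveI hKchar : CharP K 2 := charP_of_injective_algebraMap (φ.injective) 2
  set θ := AdjoinRoot.root p with hθ
  have hp0 : p ≠ 0 := hirr.out.ne_zero
  have hdpos : 0 < d := hd ▸ hirr.out.natDegree_pos
  -- c j = 0 for odd j
  have hczero : ∀ j ≤ d, Odd j → c j = 0 := by
    intro j hj hjodd
    obtain ⟨c₀, h₀, hu⟩ := ht 0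
    have h1 : c j = c₀ := hu _ (by
      show (0 : 𝔽) = (c j).sum fun I a => (∏ i ∈ I, t i) * a ^ 2
      rw [← hc j hj]; exact (part2 j hj hjodd).symm)
    have h2 : (0 : Finset ι →₀ 𝔽) = c₀ := hu _ (by
      show (0 : 𝔽) = (0 : Finset ι →₀ 𝔽).sum fun I a => (∏ i ∈ I, t i) * a ^ 2
      simp)
    rw [h1, ← h2]
  -- c 0 ∅ = 1
  have hc00 : c 0 ∅ = 1 := by
    have hcoef : p.coeff (d - 0) = 1 := by
      simpa [← hd] using hmonic.coeff_natDegree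
    obtain ⟨c₀, h₀, hu⟩ := ht 1
    have h1 : c 0 = c₀ := hu _ (by
      show (1 : 𝔽) = (c 0).sum fun I a => (∏ i ∈ I, t i) * a ^ 2
      rw [← hc 0 (Nat.zero_le d), hcoef])
    have h2 : Finsupp.single (∅ : Finset ι) (1 : 𝔽) = c₀ := by
      refine hu _ ?_
      show (1 : 𝔽) = (Finsupp.single (∅ : Finset ι) (1 : 𝔽)).sum
        fun I a => (∏ i ∈ I, t i) * a ^ 2
      rw [Finsupp.sum_single_index (by simp)]
      simp
    rw [h1, ← h2, Finsupp.single_eq_same]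
  -- base relation
  have hrel0 : ∑ k ∈ Finset.range (d + 1), φ (p.coeff k) * θ ^ k = 0 := by
    have h := AdjoinRoot.eval₂_root p
    rwa [Polynomial.eval₂_eq_sum_range, hd, ← AdjoinRoot.algebraMap_eq] at h
  have hrel1 : ∑ j ∈ Finset.range (d + 1), φ (p.coeff (d - j)) * θ ^ (d - j) = 0 := by
    have h := Finset.sum_range_reflect (fun k => φ (p.coeff k) * θ ^ k) (d + 1)
    simp only [Nat.add_sub_cancel] at h
    rw [h]; exact hrel0
  set T : Finset (Finset ι) := (Finset.range (d + 1)).biUnion (fun j => (c j).support) with hT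
  set g : Finset ι → K := fun I => ∑ j ∈ Finset.range (d + 1), φ (c j I) * θ ^ ((d - j) / 2)
    with hg
  have key : ∀ I, (g I) ^ 2 = ∑ j ∈ Finset.range (d + 1), φ (c j I) ^ 2 * θ ^ (d - j) := by
    intro I
    rw [hg]
    rw [CharTwo.sum_sq]
    refine Finset.sum_congr rfl fun j hj => ?_
    rw [Finset.mem_range] at hj
    rw [mul_pow, ← pow_mul]
    by_cases hcj : c j I = 0
    · simp [hcj]
    · have hje : Even j := by
        by_contra hjo
        rw [hczero j (by omega) (Nat.not_even_iff_odd.mp hjo)] at hcj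
        simp at hcj
      have hdvd : 2 ∣ (d - j) := by
        obtain ⟨r, hr⟩ := hdeven
        obtain ⟨s, hs⟩ := hje
        omega
      rw [Nat.div_mul_cancel hdvd]
  have hrel2 : ∑ I ∈ T, (∏ i ∈ I, φ (t i)) * g I ^ 2 = 0 := by
    calc ∑ I ∈ T, (∏ i ∈ I, φ (t i)) * g I ^ 2
        = ∑ I ∈ T, ∑ j ∈ Finset.range (d + 1),
            (∏ i ∈ I, φ (t i)) * (φ (c j I) ^ 2 * θ ^ (d - j)) := by
          refine Finset.sum_congr rfl fun I _ => ?_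
          rw [key, Finset.mul_sum]
      _ = ∑ j ∈ Finset.range (d + 1), ∑ I ∈ T,
            (∏ i ∈ I, φ (t i)) * (φ (c j I) ^ 2 * θ ^ (d - j)) := Finset.sum_comm
      _ = ∑ j ∈ Finset.range (d + 1), φ (p.coeff (d - j)) * θ ^ (d - j) := by
          refine Finset.sum_congr rfl fun j hj => ?_
          rw [Finset.mem_range] at hj
          have hsub : (c j).support ⊆ T := fun I hI =>
            Finset.mem_biUnion.mpr ⟨j, Finset.mem_range.mpr (by omega), hI⟩
          rw [hc j (by omega), map_finsuppSum, Finsupp.sum, Finset.sum_mul]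
          rw [← Finset.sum_subset hsub (fun I _ hI => by
            rw [Finsupp.notMem_support_iff.mp hI]; simp)]
          refine Finset.sum_congr rfl fun I hI => ?_
          rw [map_mul, map_prod, map_pow]
          ring
      _ = 0 := hrel1
  -- transport to Fin n
  have hrangesub : ∀ I ∈ T, ↑I ⊆ Set.range e := by
    intro I hI i hi
    obtain ⟨j, hj, hIj⟩ := Finset.mem_biUnion.mp hI
    rw [Finset.mem_range] at hj
    rw [hrange]
    exact ⟨j, by omega, I, hIj, hi⟩
  have hgzero : ∀ I, I ∉ T → g I = 0 := by
    intro I hI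
    rw [hg]
    refine Finset.sum_eq_zero fun j hj => ?_
    have : c j I = 0 := Finsupp.notMem_support_iff.mp
      (fun h => hI (Finset.mem_biUnion.mpr ⟨j, hj, h⟩))
    rw [this, map_zero, zero_mul]
  have hrel3 : ∑ J ∈ (Finset.univ : Finset (Fin n)).powerset,
      (∏ m ∈ J, φ (t (e m))) * (g (J.image e)) ^ 2 = 0 := by
    have hstep : ∀ J : Finset (Fin n), (∏ m ∈ J, φ (t (e m))) = ∏ i ∈ J.image e, φ (t i) :=
      fun J => (Finset.prod_image (f := fun i => φ (t i)) (fun x _ y _ h => he h)).symm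
    calc ∑ J ∈ (Finset.univ : Finset (Fin n)).powerset,
          (∏ m ∈ J, φ (t (e m))) * (g (J.image e)) ^ 2
        = ∑ J ∈ (Finset.univ : Finset (Fin n)).powerset,
            (∏ i ∈ J.image e, φ (t i)) * (g (J.image e)) ^ 2 := by
          refine Finset.sum_congr rfl fun J _ => ?_; rw [hstep]
      _ = ∑ I ∈ (Finset.univ : Finset (Fin n)).powerset.image (Finset.image e),
            (∏ i ∈ I, φ (t i)) * (g I) ^ 2 := by
          rw [Finset.sum_image (fun J1 _ J2 _ h => Finset.image_injective he h)]
      _ = ∑ I ∈ T, (∏ i ∈ I, φ (t i)) * (g I) ^ 2 := by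
          refine (Finset.sum_subset ?_ ?_).symm
          · intro I hI
            have hsub := hrangesub I hI
            refine Finset.mem_image.mpr ⟨I.preimage e he.injOn, Finset.mem_powerset.mpr
              (Finset.subset_univ _), ?_⟩
            rw [Finset.image_preimage]
            exact Finset.filter_true_of_mem fun i hi => hsub hi
          · intro I _ hI
            rw [hgzero I hI]
            simp
      _ = 0 := hrel2
  have hall := indep_lemma (fun m => φ (t (e m))) hcon Finset.univ
    (fun J => (g (J.image e)) ^ 2) (fun J => ⟨g (J.image e), rfl⟩) hrel3
  have hg0 : g ∅ = 0 := by
    have h := hall ∅ (Finset.mem_powerset.mpr (Finset.empty_subset _))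
    simp only [Finset.image_empty] at h
    exact (pow_eq_zero_iff two_ne_zero).mp h
  -- contradiction via minimal polynomial
  set q : Polynomial 𝔽 :=
    ∑ j ∈ Finset.range (d + 1), Polynomial.C (c j ∅) * Polynomial.X ^ ((d - j) / 2) with hq
  have hqeval : Polynomial.aeval θ q = 0 := by
    rw [hq, map_sum]
    rw [hg] at hg0
    rw [← hg0]
    refine Finset.sum_congr rfl fun j hj => ?_
    rw [map_mul, Polynomial.aeval_C, map_pow, Polynomial.aeval_X]
  have hqcoeff : q.coeff (d / 2) = 1 := by
    rw [hq, Polynomial.finset_sum_coeff]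
    rw [Finset.sum_eq_single 0]
    · simp [hc00]
    · intro j hj hj0
      rw [Finset.mem_range] at hj
      rw [Polynomial.coeff_C_mul, Polynomial.coeff_X_pow, if_neg, mul_zero]
      obtain ⟨r, hr⟩ := hdeven
      omega
    · intro h
      exact absurd (Finset.mem_range.mpr (by omega)) h
  have hqne : q ≠ 0 := fun h => by
    rw [h] at hqcoeff
    simp at hqcoeff
  have hmin : minpoly 𝔽 θ = p := by
    rw [hθ, AdjoinRoot.minpoly_root hp0, hmonic.leadingCoeff, inv_one, map_one, mul_one]
  have hdeg := minpoly.degree_le_of_ne_zero 𝔽 θ hqne hqeval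
  rw [hmin] at hdeg
  have hnat : p.natDegree ≤ q.natDegree := Polynomial.natDegree_le_natDegree hdeg
  have hqdeg : q.natDegree ≤ d / 2 := by
    rw [hq]
    refine Polynomial.natDegree_sum_le_of_forall_le _ _ fun j hj => ?_
    refine le_trans (Polynomial.natDegree_mul_le) ?_
    simp only [Polynomial.natDegree_C, Polynomial.natDegree_X_pow, zero_add]
    omega
  obtain ⟨r, hr⟩ := hdeven
  rw [hd] at hnat
  omega
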